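/- Let K ⊂ ℝ³ be a centrally symmetric convex body which is strongly convex with smooth boundary (K ∈ 𝒦̂), and put L = X(π − Θ(K))K. Then Θ(L) = π − Θ(K), Φ(L) = π − Ψ(K), and Ψ(L) = Φ(K). -/

import Mathlib

open MeasureTheory Real Set
open scoped RealInnerProductSpace

noncomputable section

/-- Euclidean 3-space. -/
abbrev E3 := EuclideanSpace ℝ (Fin 3)

/-- The point `(a, b, c)` of `ℝ³`. -/
def pt (a b c : ℝ) : E3 := (WithLp.equiv 2 (Fin 3 → ℝ)).symm ![a, b, c]

/-- The polar body `K° = {y : ⟪x, y⟫ ≤ 1 for all x ∈ K}`. -/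
def polarBody (K : Set E3) : Set E3 := {y : E3 | ∀ x ∈ K, ⟪x, y⟫ ≤ 1}

/-- The radial function `ρ_K(x) = max {t ≥ 0 : t • x ∈ K}`. -/
def radial (K : Set E3) (x : E3) : ℝ := sSup {t : ℝ | 0 ≤ t ∧ t • x ∈ K}

/-- The spherical parametrization `P(α, β)`. -/
def sphP (α β : ℝ) : E3 := pt (cos α) (sin α * cos β) (sin α * sin β)

/-- Rotation by angle `θ` about the `x`-axis. -/
def rotX (θ : ℝ) (p : E3) : E3 :=
  pt (p 0) (cos θ * p 1 - sin θ * p 2) (sin θ * p 1 + cos θ * p 2)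

/-- Rotation by angle `φ` about the `y`-axis. -/
def rotY (φ : ℝ) (p : E3) : E3 :=
  pt (cos φ * p 0 + sin φ * p 2) (p 1) (-sin φ * p 0 + cos φ * p 2)

/-- Rotation by angle `ψ` about the `z`-axis. -/
def rotZ (ψ : ℝ) (p : E3) : E3 :=
  pt (cos ψ * p 0 - sin ψ * p 1) (sin ψ * p 0 + cos ψ * p 1) (p 2)

/-- `K ∈ 𝒦̂`: a centrally symmetric convex body in `ℝ³` which is strongly convex with
smooth boundary, i.e. `h_K = gauge²/2` is `C^∞` away from the origin and has positive
definite Hessian at every point of the unit sphere. -/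
def IsKhat (K : Set E3) : Prop :=
  IsCompact K ∧ Convex ℝ K ∧ (interior K).Nonempty ∧ K = -K ∧
    ContDiffOn ℝ (⊤ : ℕ∞) (fun x => gauge K x ^ 2 / 2) {0}ᶜ ∧
    ∀ x : E3, ‖x‖ = 1 → ∀ v : E3, v ≠ 0 →
      0 < fderiv ℝ (fderiv ℝ (fun y => gauge K y ^ 2 / 2)) x v v

/-- `Θ` satisfies the defining property of `Θ(K)`. -/
def ThetaEq (K : Set E3) (Θ : ℝ) : Prop :=
  Θ ∈ Ioo 0 π ∧
    ∫ β in (0:ℝ)..Θ, ∫ α in (0:ℝ)..π, radial K (sphP α β) ^ 3 * sin α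
      = ∫ β in Θ..π, ∫ α in (0:ℝ)..π, radial K (sphP α β) ^ 3 * sin α

/-- `Φ` satisfies the defining property of `Φ(K)`. -/
def PhiEq (K : Set E3) (Φ : ℝ) : Prop :=
  Φ ∈ Ioo 0 π ∧
    ∫ α in (0:ℝ)..Φ, radial K (sphP α 0) ^ 2 = ∫ α in Φ..π, radial K (sphP α 0) ^ 2

/-- `Ψ` satisfies the defining property of `Ψ(K)`, where `Θ = Θ(K)`. -/
def PsiEq (K : Set E3) (Θ Ψ : ℝ) : Prop :=
  Ψ ∈ Ioo 0 π ∧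
    ∫ α in (0:ℝ)..Ψ, radial K (sphP α Θ) ^ 2 = ∫ α in Ψ..π, radial K (sphP α Θ) ^ 2

/-- The unitriangular map whose inverse is the matrix `𝒜(K)` (for `Θ = Θ(K)`, `Φ = Φ(K)`,
`Ψ = Ψ(K)`); thus the body `𝒜(K) K` is the preimage `shear Θ Φ Ψ ⁻¹' K`. -/
def shear (Θ Φ Ψ : ℝ) (p : E3) : E3 :=
  pt (p 0 + p 1 / tan Φ + p 2 / (sin Θ * tan Ψ)) (p 1 + p 2 / tan Θ) (p 2)

/-- `v₁ = vol(L ∩ {x ≥ 0, y ≥ 0, z ≥ 0})`. -/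
def vol₁ (L : Set E3) : ℝ := (volume (L ∩ {p : E3 | 0 ≤ p 0 ∧ 0 ≤ p 1 ∧ 0 ≤ p 2})).toReal

/-- `v₂ = vol(L ∩ {x ≤ 0, y ≥ 0, z ≥ 0})`. -/
def vol₂ (L : Set E3) : ℝ := (volume (L ∩ {p : E3 | p 0 ≤ 0 ∧ 0 ≤ p 1 ∧ 0 ≤ p 2})).toReal

/-- `v₃ = vol(L ∩ {x ≤ 0, y ≤ 0, z ≥ 0})`. -/
def vol₃ (L : Set E3) : ℝ := (volume (L ∩ {p : E3 | p 0 ≤ 0 ∧ p 1 ≤ 0 ∧ 0 ≤ p 2})).toReal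

/-- `v₄ = vol(L ∩ {x ≥ 0, y ≤ 0, z ≥ 0})`. -/
def vol₄ (L : Set E3) : ℝ := (volume (L ∩ {p : E3 | 0 ≤ p 0 ∧ p 1 ≤ 0 ∧ 0 ≤ p 2})).toReal

/-- `F` applied to the transformed body `L' = 𝒜(K) K`. -/
def Ffun (L : Set E3) : ℝ :=
  (μH[2] (L ∩ {p : E3 | p 0 = 0 ∧ 0 ≤ p 1 ∧ 0 ≤ p 2})).toReal -
    (μH[2] (L ∩ {p : E3 | p 0 = 0 ∧ p 1 ≤ 0 ∧ 0 ≤ p 2})).toReal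

/-- `G = v₁ + v₃ - v₂ - v₄` applied to the transformed body `L' = 𝒜(K) K`. -/
def Gfun (L : Set E3) : ℝ := vol₁ L + vol₃ L - vol₂ L - vol₄ L

/-- `H = v₁ + v₄ - v₂ - v₃` applied to the transformed body `L' = 𝒜(K) K`. -/
def Hfun (L : Set E3) : ℝ := vol₁ L + vol₄ L - vol₂ L - vol₃ L

/-- Condition (★). -/
def StarCond (K : Set E3) : Prop :=
  volume (K ∩ {p : E3 | 0 ≤ p 0 ∧ 0 ≤ p 1 ∧ 0 ≤ p 2})
      = volume (K ∩ {p : E3 | p 0 ≤ 0 ∧ 0 ≤ p 1 ∧ 0 ≤ p 2}) ∧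
    volume (K ∩ {p : E3 | p 0 ≤ 0 ∧ 0 ≤ p 1 ∧ 0 ≤ p 2})
      = volume (K ∩ {p : E3 | p 0 ≤ 0 ∧ p 1 ≤ 0 ∧ 0 ≤ p 2}) ∧
    volume (K ∩ {p : E3 | p 0 ≤ 0 ∧ p 1 ≤ 0 ∧ 0 ≤ p 2})
      = volume (K ∩ {p : E3 | 0 ≤ p 0 ∧ p 1 ≤ 0 ∧ 0 ≤ p 2}) ∧
    μH[2] (K ∩ {p : E3 | p 0 = 0 ∧ 0 ≤ p 1 ∧ 0 ≤ p 2})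
      = μH[2] (K ∩ {p : E3 | p 0 = 0 ∧ p 1 ≤ 0 ∧ 0 ≤ p 2}) ∧
    μH[2] (K ∩ {p : E3 | p 1 = 0 ∧ 0 ≤ p 0 ∧ 0 ≤ p 2})
      = μH[2] (K ∩ {p : E3 | p 1 = 0 ∧ 0 ≤ p 0 ∧ p 2 ≤ 0}) ∧
    μH[2] (K ∩ {p : E3 | p 2 = 0 ∧ 0 ≤ p 0 ∧ 0 ≤ p 1})
      = μH[2] (K ∩ {p : E3 | p 2 = 0 ∧ p 0 ≤ 0 ∧ 0 ≤ p 1})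

/-- The cube `[-1,1]³`. -/
def cube : Set E3 := {x : E3 | ∀ i, x i ∈ Icc (-1:ℝ) 1}

/-- The cross product on `ℝ³`. -/
def cross (a b : E3) : E3 :=
  pt (a 1 * b 2 - a 2 * b 1) (a 2 * b 0 - a 0 * b 2) (a 0 * b 1 - a 1 * b 0)

namespace Lem55

@[simp] lemma pt_apply0 (a b c : ℝ) : pt a b c 0 = a := rfl
@[simp] lemma pt_apply1 (a b c : ℝ) : pt a b c 1 = b := rfl
@[simp] lemma pt_apply2 (a b c : ℝ) : pt a b c 2 = c := rfl

lemma E3.ext' {p q : E3} (h0 : p 0 = q 0) (h1 : p 1 = q 1) (h2 : p 2 = q 2) : p = q := by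
  apply (WithLp.equiv 2 (Fin 3 → ℝ)).injective; funext i; fin_cases i <;> assumption

lemma rotX_smul (θ t : ℝ) (p : E3) : rotX θ (t • p) = t • rotX θ p := by
  apply E3.ext' <;> simp [rotX, PiLp.smul_apply, smul_eq_mul] <;> ring

lemma rotX_rotX (θ : ℝ) (p : E3) : rotX (-θ) (rotX θ p) = p := by
  have h := sin_sq_add_cos_sq θ
  apply E3.ext'
  · simp [rotX]
  · simp [rotX]; linear_combination (p 1) * h
  · simp [rotX]; linear_combination (p 2) * h

lemma rotX_sphP (θ α β : ℝ) : rotX θ (sphP α β) = sphP α (β + θ) := by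
  apply E3.ext' <;> simp [rotX, sphP, cos_add, sin_add] <;> ring

lemma neg_sphP (α β : ℝ) : sphP (π - α) (β + π) = - sphP α β := by
  apply E3.ext' <;>
    simp [sphP, cos_pi_sub, sin_pi_sub, cos_add, sin_add, PiLp.neg_apply] <;> ring

lemma norm_sphP (α β : ℝ) : ‖sphP α β‖ = 1 := by
  have h : ∑ i, ‖sphP α β i‖ ^ 2 = 1 := by
    simp only [Fin.sum_univ_three, sphP, pt_apply0, pt_apply1, pt_apply2, Real.norm_eq_abs,
      sq_abs]
    nlinarith [sin_sq_add_cos_sq α, sin_sq_add_cos_sq β]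
  rw [EuclideanSpace.norm_eq, h, Real.sqrt_one]

lemma sphP_ne_zero (α β : ℝ) : sphP α β ≠ 0 := by
  intro h
  have := norm_sphP α β
  rw [h, norm_zero] at this
  norm_num at this

lemma continuous_sphP' {X : Type*} [TopologicalSpace X] {f g : X → ℝ}
    (hf : Continuous f) (hg : Continuous g) :
    Continuous fun y => sphP (f y) (g y) := by
  unfold sphP pt
  refine Continuous.comp ?_ ?_
  · exact (PiLp.continuous_toLp 2 (fun _ : Fin 3 => ℝ))
  · refine continuous_pi fun i => ?_
    fin_cases i <;> simp <;> fun_prop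

lemma radial_neg {K : Set E3} (hK : K = -K) (x : E3) : radial K (-x) = radial K x := by
  unfold radial
  congr 1
  ext t
  simp only [mem_setOf_eq, smul_neg, and_congr_right_iff]
  intro _
  constructor
  · intro h; rw [hK]; simpa [Set.mem_neg] using h
  · intro h; rw [hK] at h; simpa [Set.mem_neg] using h

lemma rotX_injective (θ : ℝ) : Function.Injective (rotX θ) := by
  intro a b h
  have := congrArg (rotX (-θ)) h
  rwa [rotX_rotX, rotX_rotX] at this

lemma radial_rotX (K : Set E3) (θ : ℝ) (x : E3) :
    radial (rotX θ '' K) (rotX θ x) = radial K x := by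
  unfold radial
  congr 1
  ext t
  simp only [mem_setOf_eq, ← rotX_smul, and_congr_right_iff]
  intro _
  exact (rotX_injective θ).mem_set_image

lemma radial_rot_sphP {K : Set E3} (hK : K = -K) (Θ α β : ℝ) :
    radial (rotX (π - Θ) '' K) (sphP α β) = radial K (sphP (π - α) (β + Θ)) := by
  have h1 : sphP α β = rotX (π - Θ) (sphP α (β - (π - Θ))) := by
    rw [rotX_sphP]; ring_nf
  have h2 : sphP (π - α) (β + Θ) = - sphP α (β - (π - Θ)) := by
    rw [show β + Θ = (β - (π - Θ)) + π by ring]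
    exact neg_sphP _ _
  rw [h1, radial_rotX, h2, radial_neg hK]

section RadialGauge

variable {K : Set E3}

lemma zero_mem_interior (hconv : Convex ℝ K) (hne : (interior K).Nonempty)
    (hsym : K = -K) : (0 : E3) ∈ interior K := by
  obtain ⟨x, hx⟩ := hne
  have hx' : -x ∈ interior K := by
    have h1 : x ∈ interior (-K) := by rwa [← hsym]
    have h2 : -K = (Homeomorph.neg E3) ⁻¹' K := rfl
    rw [h2, ← Homeomorph.preimage_interior] at h1
    exact h1
  have hci : Convex ℝ (interior K) := hconv.interior
  have h3 := hci hx hx' (by norm_num : (0:ℝ) ≤ 1/2) (by norm_num : (0:ℝ) ≤ 1/2)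
    (by norm_num : (1:ℝ)/2 + 1/2 = 1)
  simpa using h3

lemma radial_eq_inv_gauge (hcomp : IsCompact K) (hconv : Convex ℝ K)
    (h0 : (0:E3) ∈ interior K) {x : E3} (hx : x ≠ 0) :
    radial K x = (gauge K x)⁻¹ := by
  have hnhds : K ∈ nhds (0:E3) := mem_interior_iff_mem_nhds.1 h0
  have habs : Absorbent ℝ K := absorbent_nhds_zero hnhds
  have hbdd : Bornology.IsVonNBounded ℝ K :=
    (NormedSpace.isVonNBounded_iff ℝ).2 hcomp.isBounded
  have gpos : 0 < gauge K x := (gauge_pos habs hbdd).2 hx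
  have hmem : ∀ y : E3, y ∈ K ↔ gauge K y ≤ 1 := by
    intro y
    rw [gauge_le_one_iff_mem_closure hconv hnhds, hcomp.isClosed.closure_eq]
  have hset : {t : ℝ | 0 ≤ t ∧ t • x ∈ K} = Icc 0 (gauge K x)⁻¹ := by
    ext t
    simp only [mem_setOf_eq, mem_Icc]
    constructor
    · rintro ⟨ht, htx⟩
      refine ⟨ht, ?_⟩
      have := (hmem _).1 htx
      rw [gauge_smul_of_nonneg ht, smul_eq_mul] at this
      rw [← one_div, le_div_iff₀ gpos]
      linarith
    · rintro ⟨ht, htx⟩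
      refine ⟨ht, (hmem _).2 ?_⟩
      rw [gauge_smul_of_nonneg ht, smul_eq_mul]
      rw [← one_div, le_div_iff₀ gpos] at htx
      linarith
  rw [radial, hset, csSup_Icc (by positivity)]

lemma radial_ge (hcomp : IsCompact K) (hconv : Convex ℝ K) (h0 : (0:E3) ∈ interior K)
    {r : ℝ} (hr : 0 < r) (hball : Metric.ball (0:E3) r ⊆ K)
    {x : E3} (hx : ‖x‖ = 1) : r ≤ radial K x := by
  have hxne : x ≠ 0 := by intro h; rw [h, norm_zero] at hx; norm_num at hx
  rw [radial_eq_inv_gauge hcomp hconv h0 hxne]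
  have h1 : gauge K x ≤ 1 / r := by
    have := gauge_mono (absorbent_ball_zero hr) hball x
    rwa [gauge_ball hr.le, hx] at this
  have hnhds : K ∈ nhds (0:E3) := mem_interior_iff_mem_nhds.1 h0
  have gpos : 0 < gauge K x :=
    (gauge_pos (absorbent_nhds_zero hnhds)
      ((NormedSpace.isVonNBounded_iff ℝ).2 hcomp.isBounded)).2 hxne
  have h1' : gauge K x ≤ r⁻¹ := by rwa [one_div] at h1
  have h2 := inv_anti₀ gpos h1'
  rwa [inv_inv] at h2

set_option maxHeartbeats 1000000 in
lemma continuous_radial_sphP (hcomp : IsCompact K) (hconv : Convex ℝ K)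
    (h0 : (0:E3) ∈ interior K) {X : Type*} [TopologicalSpace X] {f g : X → ℝ}
    (hf : Continuous f) (hg : Continuous g) :
    Continuous fun y => radial K (sphP (f y) (g y)) := by
  have hnhds : K ∈ nhds (0:E3) := mem_interior_iff_mem_nhds.1 h0
  have habs : Absorbent ℝ K := absorbent_nhds_zero hnhds
  have hbdd : Bornology.IsVonNBounded ℝ K :=
    (NormedSpace.isVonNBounded_iff ℝ).2 hcomp.isBounded
  have heq : (fun y => radial K (sphP (f y) (g y)))
      = fun y => (gauge K (sphP (f y) (g y)))⁻¹ :=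
    funext fun y => radial_eq_inv_gauge hcomp hconv h0 (sphP_ne_zero _ _)
  rw [heq]
  have hc : Continuous fun y => gauge K (sphP (f y) (g y)) :=
    (continuous_gauge hconv hnhds).comp (continuous_sphP' hf hg)
  exact hc.inv₀ fun y => ((gauge_pos habs hbdd).2 (sphP_ne_zero _ _)).ne'

end RadialGauge

lemma balance_unique {f : ℝ → ℝ} (hf : Continuous f) {c : ℝ} (hc : 0 < c)
    (hfc : ∀ x, c ≤ f x) {a b : ℝ}
    (ha : (∫ x in (0:ℝ)..a, f x) = ∫ x in a..π, f x)
    (hb : (∫ x in (0:ℝ)..b, f x) = ∫ x in b..π, f x) : a = b := by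
  have hint : ∀ u v : ℝ, IntervalIntegrable f volume u v := fun u v =>
    hf.intervalIntegrable u v
  have key : ∀ u : ℝ, ((∫ x in (0:ℝ)..u, f x) = ∫ x in u..π, f x) →
      2 * ∫ x in (0:ℝ)..u, f x = ∫ x in (0:ℝ)..π, f x := by
    intro u hu
    have h := intervalIntegral.integral_add_adjacent_intervals (hint 0 u) (hint u π)
    linarith
  have h2 : (∫ x in (0:ℝ)..a, f x) = ∫ x in (0:ℝ)..b, f x := by
    have ka := key a ha; have kb := key b hb; linarith
  have hmono : StrictMono fun u => ∫ x in (0:ℝ)..u, f x := by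
    intro u v huv
    have h1 := intervalIntegral.integral_add_adjacent_intervals (hint 0 u) (hint u v)
    have hle : (v - u) * c ≤ ∫ x in u..v, f x := by
      have := intervalIntegral.integral_mono_on huv.le intervalIntegrable_const (hint u v)
        (fun x _ => hfc x)
      rwa [intervalIntegral.integral_const, smul_eq_mul] at this
    have hpos : (0:ℝ) < ∫ x in u..v, f x := lt_of_lt_of_le (by nlinarith) hle
    simp only []
    linarith
  exact hmono.injective h2

end Lem55

/-- Lemma 5.5: for `K ∈ 𝒦̂` and `L = X(π − Θ(K))K` one has `Θ(L) = π − Θ(K)`,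
`Φ(L) = π − Ψ(K)` and `Ψ(L) = Φ(K)`. -/
theorem theta_phi_psi_rotX (K : Set E3) (hK : IsKhat K)
    (Θ Φ Ψ : ℝ) (hΘ : ThetaEq K Θ) (hΦ : PhiEq K Φ) (hΨ : PsiEq K Θ Ψ)
    (Θ' Φ' Ψ' : ℝ)
    (hΘ' : ThetaEq (rotX (π - Θ) '' K) Θ')
    (hΦ' : PhiEq (rotX (π - Θ) '' K) Φ')
    (hΨ' : PsiEq (rotX (π - Θ) '' K) Θ' Ψ') :
    Θ' = π - Θ ∧ Φ' = π - Ψ ∧ Ψ' = Φ := by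
  obtain ⟨hcomp, hconv, hne, hsym, -, -⟩ := hK
  have h0 : (0:E3) ∈ interior K := Lem55.zero_mem_interior hconv hne hsym
  obtain ⟨r, hr, hball⟩ : ∃ r > 0, Metric.ball (0:E3) r ⊆ K := by
    rcases Metric.mem_nhds_iff.1 (mem_interior_iff_mem_nhds.1 h0) with ⟨r, hr, hb⟩
    exact ⟨r, hr, hb⟩
  have hrad_ge : ∀ α β : ℝ, r ≤ radial K (sphP α β) := fun α β =>
    Lem55.radial_ge hcomp hconv h0 hr hball (Lem55.norm_sphP α β)
  have hradL : ∀ α β : ℝ, radial (rotX (π - Θ) '' K) (sphP α β)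
      = radial K (sphP (π - α) (β + Θ)) := fun α β => Lem55.radial_rot_sphP hsym Θ α β
  -- inner integral transform for part 1
  have hinner : ∀ β : ℝ,
      (∫ α in (0:ℝ)..π, radial (rotX (π - Θ) '' K) (sphP α β) ^ 3 * sin α)
      = ∫ α in (0:ℝ)..π, radial K (sphP α (β + Θ)) ^ 3 * sin α := by
    intro β
    calc (∫ α in (0:ℝ)..π, radial (rotX (π - Θ) '' K) (sphP α β) ^ 3 * sin α)
        = ∫ α in (0:ℝ)..π, (fun u => radial K (sphP u (β + Θ)) ^ 3 * sin u) (π - α) := by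
          apply intervalIntegral.integral_congr
          intro α _
          simp only [hradL, sin_pi_sub]
      _ = ∫ u in (π - π)..(π - 0), radial K (sphP u (β + Θ)) ^ 3 * sin u :=
          intervalIntegral.integral_comp_sub_left
            (fun u => radial K (sphP u (β + Θ)) ^ 3 * sin u) π
      _ = ∫ α in (0:ℝ)..π, radial K (sphP α (β + Θ)) ^ 3 * sin α := by norm_num
  -- periodicity of the inner integral
  have hper : ∀ β : ℝ, (∫ α in (0:ℝ)..π, radial K (sphP α (β + π)) ^ 3 * sin α)
      = ∫ α in (0:ℝ)..π, radial K (sphP α β) ^ 3 * sin α := by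
    intro β
    have hpt : ∀ α : ℝ, radial K (sphP α (β + π)) = radial K (sphP (π - α) β) := by
      intro α
      have h1 : sphP α (β + π) = - sphP (π - α) β := by
        have h2 := Lem55.neg_sphP (π - α) β
        rw [show π - (π - α) = α by ring] at h2
        exact h2
      rw [h1, Lem55.radial_neg hsym]
    calc (∫ α in (0:ℝ)..π, radial K (sphP α (β + π)) ^ 3 * sin α)
        = ∫ α in (0:ℝ)..π, (fun u => radial K (sphP u β) ^ 3 * sin u) (π - α) := by
          apply intervalIntegral.integral_congr
          intro α _
          simp only [hpt, sin_pi_sub]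
      _ = ∫ u in (π - π)..(π - 0), radial K (sphP u β) ^ 3 * sin u :=
          intervalIntegral.integral_comp_sub_left
            (fun u => radial K (sphP u β) ^ 3 * sin u) π
      _ = ∫ α in (0:ℝ)..π, radial K (sphP α β) ^ 3 * sin α := by norm_num
  -- continuity of the shifted inner integral
  have hcontF : Continuous fun β : ℝ =>
      ∫ α in (0:ℝ)..π, radial K (sphP α (β + Θ)) ^ 3 * sin α := by
    apply intervalIntegral.continuous_parametric_intervalIntegral_of_continuous'
      (f := fun (β : ℝ) (α : ℝ) => radial K (sphP α (β + Θ)) ^ 3 * sin α)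
    have h1 : Continuous fun p : ℝ × ℝ => radial K (sphP p.2 (p.1 + Θ)) :=
      Lem55.continuous_radial_sphP hcomp hconv h0 continuous_snd
        (continuous_fst.add continuous_const)
    exact (h1.pow 3).mul (continuous_sin.comp continuous_snd)
  -- lower bound for the inner integral
  have hFge : ∀ β : ℝ, 2 * r ^ 3 ≤ ∫ α in (0:ℝ)..π, radial K (sphP α β) ^ 3 * sin α := by
    intro β
    have hci : Continuous fun α => radial K (sphP α β) ^ 3 * sin α :=
      ((Lem55.continuous_radial_sphP hcomp hconv h0 continuous_id continuous_const).pow 3).mul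
        continuous_sin
    have hpt : ∀ α ∈ Icc (0:ℝ) π, r ^ 3 * sin α ≤ radial K (sphP α β) ^ 3 * sin α := by
      intro α hα
      have hs : 0 ≤ sin α := sin_nonneg_of_nonneg_of_le_pi hα.1 hα.2
      exact mul_le_mul_of_nonneg_right (pow_le_pow_left₀ hr.le (hrad_ge α β) 3) hs
    have hmono := intervalIntegral.integral_mono_on (μ := volume) pi_pos.le
      ((continuous_const.mul continuous_sin).intervalIntegrable 0 π)
      (hci.intervalIntegrable 0 π) hpt
    have hval : (∫ α in (0:ℝ)..π, r ^ 3 * sin α) = 2 * r ^ 3 := by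
      rw [intervalIntegral.integral_const_mul, integral_sin, Real.cos_zero, Real.cos_pi]
      ring
    simp only [Pi.mul_apply] at hmono
    linarith
  -- Part 1 : Θ' = π - Θ
  obtain ⟨hΘ'mem, hΘ'eq⟩ := hΘ'
  have e1 : ∀ a b : ℝ,
      (∫ β in a..b, ∫ α in (0:ℝ)..π, radial (rotX (π - Θ) '' K) (sphP α β) ^ 3 * sin α)
      = ∫ β in a..b, ∫ α in (0:ℝ)..π, radial K (sphP α (β + Θ)) ^ 3 * sin α :=
    fun a b => intervalIntegral.integral_congr (fun β _ => hinner β)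
  rw [e1 0 Θ', e1 Θ' π] at hΘ'eq
  have hA : (∫ β in (0:ℝ)..(π - Θ), ∫ α in (0:ℝ)..π, radial K (sphP α (β + Θ)) ^ 3 * sin α)
      = ∫ x in Θ..π, ∫ α in (0:ℝ)..π, radial K (sphP α x) ^ 3 * sin α := by
    have h := intervalIntegral.integral_comp_add_right (a := 0) (b := π - Θ)
      (f := fun x => ∫ α in (0:ℝ)..π, radial K (sphP α x) ^ 3 * sin α) Θ
    simpa using h
  have hB : (∫ β in (π - Θ)..π, ∫ α in (0:ℝ)..π, radial K (sphP α (β + Θ)) ^ 3 * sin α)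
      = ∫ x in (0:ℝ)..Θ, ∫ α in (0:ℝ)..π, radial K (sphP α x) ^ 3 * sin α := by
    have hcongr : ∀ β ∈ uIcc (π - Θ) π,
        (∫ α in (0:ℝ)..π, radial K (sphP α (β + Θ)) ^ 3 * sin α)
        = (fun x => ∫ α in (0:ℝ)..π, radial K (sphP α x) ^ 3 * sin α) (β + (Θ - π)) := by
      intro β _
      show _ = ∫ α in (0:ℝ)..π, radial K (sphP α (β + (Θ - π))) ^ 3 * sin α
      rw [show β + Θ = (β + (Θ - π)) + π by ring]
      exact hper _
    rw [intervalIntegral.integral_congr hcongr]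
    have h := intervalIntegral.integral_comp_add_right (a := π - Θ) (b := π)
      (f := fun x => ∫ α in (0:ℝ)..π, radial K (sphP α x) ^ 3 * sin α) (Θ - π)
    rw [h, show (π - Θ) + (Θ - π) = (0:ℝ) by ring, show π + (Θ - π) = Θ by ring]
  have hmain1 : (∫ β in (0:ℝ)..(π - Θ), ∫ α in (0:ℝ)..π, radial K (sphP α (β + Θ)) ^ 3 * sin α)
      = ∫ β in (π - Θ)..π, ∫ α in (0:ℝ)..π, radial K (sphP α (β + Θ)) ^ 3 * sin α := by
    rw [hA, hB]
    exact hΘ.2.symm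
  have hΘ1 : Θ' = π - Θ :=
    Lem55.balance_unique hcontF (by positivity : (0:ℝ) < 2 * r ^ 3)
      (fun x => hFge (x + Θ)) hΘ'eq hmain1
  -- Part 2 : Φ' = π - Ψ
  have hradL2 : ∀ α : ℝ, radial (rotX (π - Θ) '' K) (sphP α 0) = radial K (sphP (π - α) Θ) := by
    intro α; rw [hradL α 0, zero_add]
  obtain ⟨hΦ'mem, hΦ'eq⟩ := hΦ'
  have htr2 : ∀ a b : ℝ, (∫ α in a..b, radial (rotX (π - Θ) '' K) (sphP α 0) ^ 2)
      = ∫ x in (π - b)..(π - a), radial K (sphP x Θ) ^ 2 := by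
    intro a b
    rw [intervalIntegral.integral_congr (g := fun α => (fun x => radial K (sphP x Θ) ^ 2) (π - α))
      (fun α _ => by simp only [hradL2])]
    exact intervalIntegral.integral_comp_sub_left (fun x => radial K (sphP x Θ) ^ 2) π
  rw [htr2 0 Φ', htr2 Φ' π, sub_zero, sub_self] at hΦ'eq
  have hcontG : Continuous fun x : ℝ => radial K (sphP x Θ) ^ 2 :=
    (Lem55.continuous_radial_sphP hcomp hconv h0 continuous_id continuous_const).pow 2
  have hGge : ∀ x : ℝ, r ^ 2 ≤ radial K (sphP x Θ) ^ 2 := fun x =>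
    pow_le_pow_left₀ hr.le (hrad_ge x Θ) 2
  have hΦ'eq2 : (∫ x in (0:ℝ)..(π - Φ'), radial K (sphP x Θ) ^ 2)
      = ∫ x in (π - Φ')..π, radial K (sphP x Θ) ^ 2 := hΦ'eq.symm
  have hbal2 : π - Φ' = Ψ :=
    Lem55.balance_unique hcontG (by positivity : (0:ℝ) < r ^ 2) hGge hΦ'eq2 hΨ.2
  -- Part 3 : Ψ' = Φ
  have hradL3 : ∀ α : ℝ, radial (rotX (π - Θ) '' K) (sphP α Θ') = radial K (sphP α 0) := by
    intro α
    rw [hΘ1, hradL α (π - Θ), show (π - Θ) + Θ = 0 + π by ring, Lem55.neg_sphP α 0,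
      Lem55.radial_neg hsym]
  obtain ⟨hΨ'mem, hΨ'eq⟩ := hΨ'
  have e3 : ∀ a b : ℝ, (∫ α in a..b, radial (rotX (π - Θ) '' K) (sphP α Θ') ^ 2)
      = ∫ α in a..b, radial K (sphP α 0) ^ 2 :=
    fun a b => intervalIntegral.integral_congr (fun α _ => by rw [hradL3 α])
  rw [e3 0 Ψ', e3 Ψ' π] at hΨ'eq
  have hcontH : Continuous fun x : ℝ => radial K (sphP x 0) ^ 2 :=
    (Lem55.continuous_radial_sphP hcomp hconv h0 continuous_id continuous_const).pow 2
  have hHge : ∀ x : ℝ, r ^ 2 ≤ radial K (sphP x 0) ^ 2 := fun x =>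
    pow_le_pow_left₀ hr.le (hrad_ge x 0) 2
  have hbal3 : Ψ' = Φ :=
    Lem55.balance_unique hcontH (by positivity : (0:ℝ) < r ^ 2) hHge hΨ'eq hΦ.2
  exact ⟨hΘ1, by linarith, hbal3⟩
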